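/- arXiv:1909.01240 — 2 statements merged into one kernel-verified Lean document; each statement's English description precedes it below -/
import Mathlib

section
/- There is a well-defined Lie algebra homomorphism φ from gl_{2n+1}(ℂ)^θ to gl_{n+1}(ℂ) ⊕ gl_n(ℂ) determined by φ(e_i) = e_i + ē_i and φ(f_i) = f_i + f̄_i for i < n, φ(e_n) = 2e_n, φ(f_n) = f_n, φ(d_i) = h_i + h̄_i for 1 ≤ i ≤ n, and φ(d_{n+1}) = 2h_{n+1}, where the unbarred generators on the right lie in gl_{n+1} and the barred ones in gl_n. Moreover φ is an isomorphism of Lie algebras. -/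
open Matrix

noncomputable section

/-- The matrix unit `E_{p,q}` in `gl_m` (1-based indexing). -/
def Eu (m p q : ℕ) : Matrix (Fin m) (Fin m) ℂ :=
  Matrix.of fun i j => if (i : ℕ) + 1 = p ∧ (j : ℕ) + 1 = q then 1 else 0

/-- `gl_{2n+1}(ℂ)`. -/
abbrev gl (n : ℕ) := Matrix (Fin (2*n+1)) (Fin (2*n+1)) ℂ

/-- The involution `θ` of `gl_{2n+1}(ℂ)` with `θ(E_i) = F_{2n+1-i}`,
`θ(F_i) = E_{2n+1-i}`, `θ(H_i) = H_{2n+2-i}`. -/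
def theta (n : ℕ) (X : gl n) : gl n := Matrix.of fun i j => X i.rev j.rev

theorem theta_linear (n : ℕ) (c : ℂ) (X Y : gl n) :
    theta n (X + Y) = theta n X + theta n Y ∧ theta n (c • X) = c • theta n X := by
  constructor <;> (ext i j; simp [theta])

/-- The fixed-point subalgebra `gl_{2n+1}(ℂ)^θ`, as a subspace. -/
def Fixed (n : ℕ) : Submodule ℂ (gl n) where
  carrier := {X | theta n X = X}
  add_mem' := by
    intro a b ha hb
    simp only [Set.mem_setOf_eq] at *
    rw [(theta_linear n 0 a b).1, ha, hb]
  zero_mem' := by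
    simp only [Set.mem_setOf_eq]
    ext i j; simp [theta]
  smul_mem' := by
    intro c x hx
    simp only [Set.mem_setOf_eq] at *
    rw [(theta_linear n c x x).2, hx]

/-- `e_i = E_i + F_{2n+1-i}`. -/
def eG (n i : ℕ) : gl n := Eu (2*n+1) i (i+1) + Eu (2*n+1) (2*n+2-i) (2*n+1-i)

/-- `f_i = F_i + E_{2n+1-i}`. -/
def fG (n i : ℕ) : gl n := Eu (2*n+1) (i+1) i + Eu (2*n+1) (2*n+1-i) (2*n+2-i)

/-- `d_a = H_a + H_{2n+2-a}` (so `d_{n+1} = 2H_{n+1}`). -/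
def dG (n a : ℕ) : gl n := Eu (2*n+1) a a + Eu (2*n+1) (2*n+2-a) (2*n+2-a)

/-! ### Auxiliary embeddings -/

def ι1 (n : ℕ) (a : Fin (n+1)) : Fin (2*n+1) := ⟨a.1, by have := a.2; omega⟩
def ι2 (n : ℕ) (a : Fin (n+1)) : Fin (2*n+1) := ⟨2*n - a.1, by omega⟩
def κ1 (n : ℕ) (a : Fin n) : Fin (2*n+1) := ⟨a.1, by have := a.2; omega⟩
def κ2 (n : ℕ) (a : Fin n) : Fin (2*n+1) := ⟨2*n - a.1, by have := a.2; omega⟩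

@[simp] theorem ι1_val (n : ℕ) (a : Fin (n+1)) : (ι1 n a).1 = a.1 := rfl
@[simp] theorem ι2_val (n : ℕ) (a : Fin (n+1)) : (ι2 n a).1 = 2*n - a.1 := rfl
@[simp] theorem κ1_val (n : ℕ) (a : Fin n) : (κ1 n a).1 = a.1 := rfl
@[simp] theorem κ2_val (n : ℕ) (a : Fin n) : (κ2 n a).1 = 2*n - a.1 := rfl

theorem sum_split (n : ℕ) (F : Fin (2*n+1) → ℂ) :
    ∑ k, F k = (∑ c : Fin n, (F (κ1 n c) + F (κ2 n c))) + F ⟨n, by omega⟩ := by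
  classical
  set G : ℕ → ℂ := fun k => if h : k < 2*n+1 then F ⟨k, h⟩ else 0 with hG
  have h1 : ∑ k, F k = ∑ k ∈ Finset.range (2*n+1), G k := by
    rw [← Fin.sum_univ_eq_sum_range G (2*n+1)]
    exact Finset.sum_congr rfl fun i _ => by have := i.2; simp [hG, i.2]; intro h; omega
  rw [h1]
  have h2 : 2*n+1 = n + (n+1) := by ring
  conv_lhs => rw [h2]
  rw [Finset.sum_range_add, Finset.sum_range_succ']
  have h3 : ∑ i ∈ Finset.range n, G (n + (i+1)) = ∑ i ∈ Finset.range n, G (2*n - i) := by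
    rw [← Finset.sum_range_reflect]
    apply Finset.sum_congr rfl
    intro i hi
    simp only [Finset.mem_range] at hi
    congr 1
    omega
  rw [h3]
  have h4 : ∀ c : Fin n, F (κ1 n c) + F (κ2 n c) = G c.1 + G (2*n - c.1) := by
    intro c
    have hc := c.2
    simp only [hG, κ1, κ2]
    rw [dif_pos (by omega), dif_pos (by omega)]
  have h5 : ∑ c : Fin n, (F (κ1 n c) + F (κ2 n c)) = ∑ c ∈ Finset.range n, (G c + G (2*n-c)) := by
    rw [← Fin.sum_univ_eq_sum_range (fun c => G c + G (2*n-c)) n]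
    exact Finset.sum_congr rfl fun c _ => h4 c
  rw [h5, Finset.sum_add_distrib]
  have h6 : G (n + 0) = F ⟨n, by omega⟩ := by
    simp only [hG, Nat.add_zero]
    rw [dif_pos (by omega)]
  rw [h6]; ring

/-! ### The maps P, Q, psi -/

def wA (n : ℕ) (a : Fin (n+1)) : ℂ := if (a:ℕ) = n then 2⁻¹ else 1

def P (n : ℕ) (X : gl n) : Matrix (Fin (n+1)) (Fin (n+1)) ℂ :=
  Matrix.of fun a b => wA n a * (X (ι1 n a) (ι1 n b) + X (ι1 n a) (ι2 n b))

def Q (n : ℕ) (X : gl n) : Matrix (Fin n) (Fin n) ℂ :=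
  Matrix.of fun a b => X (κ1 n a) (κ1 n b) - X (κ1 n a) (κ2 n b)

def ρ (n : ℕ) (i : Fin (2*n+1)) : Fin (n+1) := ⟨min i.1 (2*n - i.1), by omega⟩

@[simp] theorem ρ_val (n : ℕ) (i : Fin (2*n+1)) : (ρ n i).1 = min i.1 (2*n - i.1) := rfl

def sg (n : ℕ) (i : Fin (2*n+1)) : ℂ := if i.1 < n then 1 else if i.1 = n then 0 else -1

def Bext (n : ℕ) (B : Matrix (Fin n) (Fin n) ℂ) (a b : Fin (n+1)) : ℂ :=
  if h : a.1 < n ∧ b.1 < n then B ⟨a.1, h.1⟩ ⟨b.1, h.2⟩ else 0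

def psi (n : ℕ) (A : Matrix (Fin (n+1)) (Fin (n+1)) ℂ) (B : Matrix (Fin n) (Fin n) ℂ) : gl n :=
  Matrix.of fun i j =>
    (if i.1 = n then 1 else 2⁻¹) * A (ρ n i) (ρ n j)
      + sg n i * sg n j * 2⁻¹ * Bext n B (ρ n i) (ρ n j)

/-! ### Fixedness -/

theorem fix_apply {n : ℕ} {X : gl n} (hX : theta n X = X) (i j : Fin (2*n+1)) :
    X ⟨2*n - i.1, by omega⟩ ⟨2*n - j.1, by omega⟩ = X i j := by
  have h := congrFun (congrFun hX i) j
  have hi : (Fin.rev i : ℕ) = 2*n - i.1 := by rw [Fin.val_rev]; omega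
  have hj : (Fin.rev j : ℕ) = 2*n - j.1 := by rw [Fin.val_rev]; omega
  rw [show (⟨2*n - i.1, by omega⟩ : Fin (2*n+1)) = Fin.rev i from Fin.ext hi.symm,
      show (⟨2*n - j.1, by omega⟩ : Fin (2*n+1)) = Fin.rev j from Fin.ext hj.symm]
  exact h

theorem psi_fixed (n : ℕ) (A : Matrix (Fin (n+1)) (Fin (n+1)) ℂ)
    (B : Matrix (Fin n) (Fin n) ℂ) : theta n (psi n A B) = psi n A B := by
  ext i j
  show psi n A B i.rev j.rev = psi n A B i j
  have hrev : ∀ k : Fin (2*n+1), ρ n k.rev = ρ n k := by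
    intro k
    apply Fin.ext
    simp only [ρ, Fin.val_rev]
    have := k.2
    omega
  have hsg : ∀ k : Fin (2*n+1), sg n k.rev = - sg n k := by
    intro k
    have hk := k.2
    simp only [sg, Fin.val_rev]
    split_ifs <;> (try omega) <;> norm_num
  have hco : (if (i.rev : ℕ) = n then (1:ℂ) else 2⁻¹) = (if (i:ℕ) = n then (1:ℂ) else 2⁻¹) := by
    have hk := i.2
    simp only [Fin.val_rev]
    split_ifs <;> (try omega) <;> rfl
  simp only [psi, Matrix.of_apply, hrev, hsg, hco]
  ring

/-! ### P, Q of products -/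

theorem P_mul {n : ℕ} {X Y : gl n} (hX : theta n X = X) (hY : theta n Y = Y) :
    P n (X * Y) = P n X * P n Y := by
  ext a b
  rw [Matrix.mul_apply]
  show wA n a * ((X * Y) (ι1 n a) (ι1 n b) + (X * Y) (ι1 n a) (ι2 n b)) = _
  rw [Matrix.mul_apply, Matrix.mul_apply, ← Finset.sum_add_distrib]
  have key : ∀ k : Fin (2*n+1),
      X (ι1 n a) k * Y k (ι1 n b) + X (ι1 n a) k * Y k (ι2 n b)
        = X (ι1 n a) k * (Y k (ι1 n b) + Y k (ι2 n b)) := fun k => by ring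
  rw [Finset.sum_congr rfl fun k _ => key k]
  rw [sum_split n (fun k => X (ι1 n a) k * (Y k (ι1 n b) + Y k (ι2 n b)))]
  rw [Fin.sum_univ_castSucc (f := fun c : Fin (n+1) => P n X a c * P n Y c b)]
  rw [mul_add, Finset.mul_sum]
  have hsym : ∀ c : Fin n, Y (κ2 n c) (ι1 n b) + Y (κ2 n c) (ι2 n b)
      = Y (κ1 n c) (ι1 n b) + Y (κ1 n c) (ι2 n b) := by
    intro c
    have hc := c.2
    have hb := b.2
    have h1 := fix_apply hY (κ2 n c) (ι2 n b)
    have h2 := fix_apply hY (κ2 n c) (ι1 n b)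
    rw [show (⟨2*n - (κ2 n c).1, by omega⟩ : Fin (2*n+1)) = κ1 n c from
          Fin.ext (by simp; omega)] at h1 h2
    rw [show (⟨2*n - (ι2 n b).1, by omega⟩ : Fin (2*n+1)) = ι1 n b from
          Fin.ext (by simp; omega)] at h1
    rw [show (⟨2*n - (ι1 n b).1, by omega⟩ : Fin (2*n+1)) = ι2 n b from
          Fin.ext (by simp)] at h2
    rw [← h1, ← h2]; ring
  congr 1
  · apply Finset.sum_congr rfl
    intro c _
    have hc := c.2
    show wA n a * _ = (wA n a * (X (ι1 n a) (ι1 n c.castSucc) + X (ι1 n a) (ι2 n c.castSucc)))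
        * (wA n c.castSucc * (Y (ι1 n c.castSucc) (ι1 n b) + Y (ι1 n c.castSucc) (ι2 n b)))
    have h1 : ι1 n c.castSucc = κ1 n c := Fin.ext (by simp)
    have h2 : ι2 n c.castSucc = κ2 n c := Fin.ext (by simp)
    have hw : wA n c.castSucc = 1 := by
      simp only [wA, Fin.coe_castSucc]
      rw [if_neg (by omega)]
    rw [h1, h2, hw, hsym c]
    ring
  · show wA n a * _ = (wA n a * (X (ι1 n a) (ι1 n (Fin.last n)) + X (ι1 n a) (ι2 n (Fin.last n))))
        * (wA n (Fin.last n) * (Y (ι1 n (Fin.last n)) (ι1 n b) + Y (ι1 n (Fin.last n)) (ι2 n b)))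
    have h1 : ι1 n (Fin.last n) = ⟨n, by omega⟩ := Fin.ext (by simp)
    have h2 : ι2 n (Fin.last n) = ⟨n, by omega⟩ := Fin.ext (by simp; omega)
    have hw : wA n (Fin.last n) = 2⁻¹ := by simp [wA]
    rw [h1, h2, hw]
    ring

theorem Q_mul {n : ℕ} {X Y : gl n} (hX : theta n X = X) (hY : theta n Y = Y) :
    Q n (X * Y) = Q n X * Q n Y := by
  ext a b
  rw [Matrix.mul_apply]
  show (X * Y) (κ1 n a) (κ1 n b) - (X * Y) (κ1 n a) (κ2 n b) = _
  rw [Matrix.mul_apply, Matrix.mul_apply, ← Finset.sum_sub_distrib]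
  have key : ∀ k : Fin (2*n+1),
      X (κ1 n a) k * Y k (κ1 n b) - X (κ1 n a) k * Y k (κ2 n b)
        = X (κ1 n a) k * (Y k (κ1 n b) - Y k (κ2 n b)) := fun k => by ring
  rw [Finset.sum_congr rfl fun k _ => key k]
  rw [sum_split n (fun k => X (κ1 n a) k * (Y k (κ1 n b) - Y k (κ2 n b)))]
  have hb := b.2
  have hanti : ∀ c : Fin n, Y (κ2 n c) (κ1 n b) - Y (κ2 n c) (κ2 n b)
      = -(Y (κ1 n c) (κ1 n b) - Y (κ1 n c) (κ2 n b)) := by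
    intro c
    have hc := c.2
    have h1 := fix_apply hY (κ2 n c) (κ2 n b)
    have h2 := fix_apply hY (κ2 n c) (κ1 n b)
    rw [show (⟨2*n - (κ2 n c).1, by omega⟩ : Fin (2*n+1)) = κ1 n c from
          Fin.ext (by simp; omega)] at h1 h2
    rw [show (⟨2*n - (κ2 n b).1, by omega⟩ : Fin (2*n+1)) = κ1 n b from
          Fin.ext (by simp; omega)] at h1
    rw [show (⟨2*n - (κ1 n b).1, by omega⟩ : Fin (2*n+1)) = κ2 n b from
          Fin.ext (by simp)] at h2
    rw [← h1, ← h2]; ring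
  have hzero : Y ⟨n, by omega⟩ (κ1 n b) - Y ⟨n, by omega⟩ (κ2 n b) = 0 := by
    have h1 := fix_apply hY ⟨n, by omega⟩ (κ1 n b)
    rw [show (⟨2*n - (⟨n, by omega⟩ : Fin (2*n+1)).1, by omega⟩ : Fin (2*n+1))
          = (⟨n, by omega⟩ : Fin (2*n+1)) from Fin.ext (by simp; omega)] at h1
    rw [show (⟨2*n - (κ1 n b).1, by omega⟩ : Fin (2*n+1)) = κ2 n b from
          Fin.ext (by simp)] at h1
    rw [h1]; ring
  rw [hzero]
  rw [Finset.sum_congr rfl (fun c (_ : c ∈ Finset.univ) => by rw [hanti c])]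
  rw [mul_zero, add_zero]
  apply Finset.sum_congr rfl
  intro c _
  show _ = (X (κ1 n a) (κ1 n c) - X (κ1 n a) (κ2 n c)) * (Y (κ1 n c) (κ1 n b) - Y (κ1 n c) (κ2 n b))
  ring

/-! ### psi is a two-sided inverse -/

theorem psi_PQ_apply (n : ℕ) (X : gl n) (i j : Fin (2*n+1)) :
    psi n (P n X) (Q n X) i j
      = (if i.1 = n then 1 else 2⁻¹)
          * (wA n (ρ n i) * (X (ι1 n (ρ n i)) (ι1 n (ρ n j)) + X (ι1 n (ρ n i)) (ι2 n (ρ n j))))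
        + sg n i * sg n j * 2⁻¹ *
          (if (ρ n i).1 < n ∧ (ρ n j).1 < n then
             X (ι1 n (ρ n i)) (ι1 n (ρ n j)) - X (ι1 n (ρ n i)) (ι2 n (ρ n j)) else 0) := by
  have hB : Bext n (Q n X) (ρ n i) (ρ n j)
      = (if (ρ n i).1 < n ∧ (ρ n j).1 < n then
           X (ι1 n (ρ n i)) (ι1 n (ρ n j)) - X (ι1 n (ρ n i)) (ι2 n (ρ n j)) else 0) := by
    rw [Bext]
    by_cases h : (ρ n i).1 < n ∧ (ρ n j).1 < n
    · rw [dif_pos h, if_pos h]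
      show X (κ1 n ⟨(ρ n i).1, h.1⟩) (κ1 n ⟨(ρ n j).1, h.2⟩)
          - X (κ1 n ⟨(ρ n i).1, h.1⟩) (κ2 n ⟨(ρ n j).1, h.2⟩) = _
      rw [show κ1 n ⟨(ρ n i).1, h.1⟩ = ι1 n (ρ n i) from Fin.ext rfl,
          show κ1 n ⟨(ρ n j).1, h.2⟩ = ι1 n (ρ n j) from Fin.ext rfl,
          show κ2 n ⟨(ρ n j).1, h.2⟩ = ι2 n (ρ n j) from Fin.ext rfl]
    · rw [dif_neg h, if_neg h]
  show (if i.1 = n then 1 else 2⁻¹) * (P n X (ρ n i) (ρ n j))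
      + sg n i * sg n j * 2⁻¹ * Bext n (Q n X) (ρ n i) (ρ n j) = _
  rw [hB]
  rfl

theorem psi_leftinv {n : ℕ} {X : gl n} (hX : theta n X = X) :
    psi n (P n X) (Q n X) = X := by
  ext i j
  show psi n (P n X) (Q n X) i j = X i j
  rw [psi_PQ_apply]
  have hi2 := i.2
  have hj2 := j.2
  rcases lt_trichotomy i.1 n with hi | hi | hi <;> rcases lt_trichotomy j.1 n with hj | hj | hj
  · -- i < n, j < n
    rw [show ι1 n (ρ n i) = i from Fin.ext (by simp; omega),
        show ι1 n (ρ n j) = j from Fin.ext (by simp; omega),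
        show ι2 n (ρ n j) = ⟨2*n - j.1, by omega⟩ from Fin.ext (by simp; omega),
        if_neg (by omega), if_pos (by constructor <;> simp <;> omega),
        show sg n i = 1 from by rw [sg, if_pos hi],
        show sg n j = 1 from by rw [sg, if_pos hj],
        show wA n (ρ n i) = 1 from by rw [wA]; rw [if_neg (by simp; omega)]]
    ring
  · -- i < n, j = n
    rw [show ι1 n (ρ n i) = i from Fin.ext (by simp; omega),
        show ι1 n (ρ n j) = j from Fin.ext (by simp; omega),
        show ι2 n (ρ n j) = j from Fin.ext (by simp; omega),
        if_neg (by omega), if_neg (by simp; omega),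
        show wA n (ρ n i) = 1 from by rw [wA]; rw [if_neg (by simp; omega)],
        show sg n j = 0 from by rw [sg, if_neg (by omega), if_pos hj]]
    ring
  · -- i < n, j > n
    rw [show ι1 n (ρ n i) = i from Fin.ext (by simp; omega),
        show ι1 n (ρ n j) = ⟨2*n - j.1, by omega⟩ from Fin.ext (by simp; omega),
        show ι2 n (ρ n j) = j from Fin.ext (by simp; omega),
        if_neg (by omega), if_pos (by constructor <;> simp <;> omega),
        show sg n i = 1 from by rw [sg, if_pos hi],
        show sg n j = -1 from by rw [sg, if_neg (by omega), if_neg (by omega)],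
        show wA n (ρ n i) = 1 from by rw [wA]; rw [if_neg (by simp; omega)]]
    ring
  · -- i = n, j < n
    have hfix := fix_apply hX i j
    rw [show (⟨2*n - i.1, by omega⟩ : Fin (2*n+1)) = i from Fin.ext (by simp; omega)] at hfix
    rw [show ι1 n (ρ n i) = i from Fin.ext (by simp; omega),
        show ι1 n (ρ n j) = j from Fin.ext (by simp; omega),
        show ι2 n (ρ n j) = ⟨2*n - j.1, by omega⟩ from Fin.ext (by simp; omega),
        if_pos hi, hfix,
        show sg n i = 0 from by rw [sg, if_neg (by omega), if_pos hi],
        show wA n (ρ n i) = 2⁻¹ from by rw [wA]; rw [if_pos (by simp; omega)]]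
    ring
  · -- i = n, j = n
    rw [show ι1 n (ρ n i) = i from Fin.ext (by simp; omega),
        show ι1 n (ρ n j) = j from Fin.ext (by simp; omega),
        show ι2 n (ρ n j) = j from Fin.ext (by simp; omega),
        if_pos hi,
        show sg n i = 0 from by rw [sg, if_neg (by omega), if_pos hi],
        show wA n (ρ n i) = 2⁻¹ from by rw [wA]; rw [if_pos (by simp; omega)]]
    ring
  · -- i = n, j > n
    have hfix := fix_apply hX i j
    rw [show (⟨2*n - i.1, by omega⟩ : Fin (2*n+1)) = i from Fin.ext (by simp; omega)] at hfix
    rw [show ι1 n (ρ n i) = i from Fin.ext (by simp; omega),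
        show ι1 n (ρ n j) = ⟨2*n - j.1, by omega⟩ from Fin.ext (by simp; omega),
        show ι2 n (ρ n j) = j from Fin.ext (by simp; omega),
        if_pos hi, hfix,
        show sg n i = 0 from by rw [sg, if_neg (by omega), if_pos hi],
        show wA n (ρ n i) = 2⁻¹ from by rw [wA]; rw [if_pos (by simp; omega)]]
    ring
  · -- i > n, j < n
    have hfix := fix_apply hX i j
    rw [show ι1 n (ρ n i) = ⟨2*n - i.1, by omega⟩ from Fin.ext (by simp; omega),
        show ι1 n (ρ n j) = j from Fin.ext (by simp; omega),
        show ι2 n (ρ n j) = ⟨2*n - j.1, by omega⟩ from Fin.ext (by simp; omega),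
        if_neg (by omega), if_pos (by constructor <;> simp <;> omega),
        show sg n i = -1 from by rw [sg, if_neg (by omega), if_neg (by omega)],
        show sg n j = 1 from by rw [sg, if_pos hj],
        show wA n (ρ n i) = 1 from by rw [wA]; rw [if_neg (by simp; omega)],
        ← hfix]
    ring
  · -- i > n, j = n
    have hfix := fix_apply hX i j
    rw [show (⟨2*n - j.1, by omega⟩ : Fin (2*n+1)) = j from Fin.ext (by simp; omega)] at hfix
    rw [show ι1 n (ρ n i) = ⟨2*n - i.1, by omega⟩ from Fin.ext (by simp; omega),
        show ι1 n (ρ n j) = j from Fin.ext (by simp; omega),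
        show ι2 n (ρ n j) = j from Fin.ext (by simp; omega),
        if_neg (by omega),
        show sg n i = -1 from by rw [sg, if_neg (by omega), if_neg (by omega)],
        show sg n j = 0 from by rw [sg, if_neg (by omega), if_pos hj],
        show wA n (ρ n i) = 1 from by rw [wA]; rw [if_neg (by simp; omega)],
        hfix]
    ring
  · -- i > n, j > n
    have hfix := fix_apply hX i j
    rw [show ι1 n (ρ n i) = ⟨2*n - i.1, by omega⟩ from Fin.ext (by simp; omega),
        show ι1 n (ρ n j) = ⟨2*n - j.1, by omega⟩ from Fin.ext (by simp; omega),
        show ι2 n (ρ n j) = j from Fin.ext (by simp; omega),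
        if_neg (by omega), if_pos (by constructor <;> simp <;> omega),
        show sg n i = -1 from by rw [sg, if_neg (by omega), if_neg (by omega)],
        show sg n j = -1 from by rw [sg, if_neg (by omega), if_neg (by omega)],
        show wA n (ρ n i) = 1 from by rw [wA]; rw [if_neg (by simp; omega)],
        hfix]
    ring

theorem P_psi (n : ℕ) (A : Matrix (Fin (n+1)) (Fin (n+1)) ℂ) (B : Matrix (Fin n) (Fin n) ℂ) :
    P n (psi n A B) = A := by
  ext a b
  have ha := a.2
  have hb := b.2
  show wA n a * (psi n A B (ι1 n a) (ι1 n b) + psi n A B (ι1 n a) (ι2 n b)) = A a b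
  simp only [psi, Matrix.of_apply]
  rw [show ρ n (ι1 n a) = a from Fin.ext (by simp; omega),
      show ρ n (ι1 n b) = b from Fin.ext (by simp; omega),
      show ρ n (ι2 n b) = b from Fin.ext (by simp; omega)]
  simp only [wA, sg, Bext]
  split_ifs <;> (try simp only [ι1_val, ι2_val] at *) <;> (try omega) <;> ring

theorem Q_psi (n : ℕ) (A : Matrix (Fin (n+1)) (Fin (n+1)) ℂ) (B : Matrix (Fin n) (Fin n) ℂ) :
    Q n (psi n A B) = B := by
  ext a b
  have ha := a.2
  have hb := b.2
  show psi n A B (κ1 n a) (κ1 n b) - psi n A B (κ1 n a) (κ2 n b) = B a b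
  simp only [psi, Matrix.of_apply]
  rw [show ρ n (κ2 n b) = ρ n (κ1 n b) from Fin.ext (by simp only [ρ_val, κ1_val, κ2_val]; omega)]
  rw [show Bext n B (ρ n (κ1 n a)) (ρ n (κ1 n b)) = B a b from by
        rw [Bext, dif_pos ⟨by simp only [ρ_val, κ1_val]; omega, by simp only [ρ_val, κ1_val]; omega⟩]
        congr 1 <;> exact Fin.ext (by simp only [ρ_val, κ1_val]; omega),
      show sg n (κ1 n a) = 1 from by rw [sg, if_pos (by simp only [κ1_val]; omega)],
      show sg n (κ1 n b) = 1 from by rw [sg, if_pos (by simp only [κ1_val]; omega)],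
      show sg n (κ2 n b) = -1 from by
        rw [sg, if_neg (by simp only [κ2_val]; omega), if_neg (by simp only [κ2_val]; omega)],
      if_neg (show ¬((κ1 n a).1 = n) from by simp only [κ1_val]; omega)]
  ring

/-! ### Linearity -/

theorem P_add (n : ℕ) (U V : gl n) : P n (U + V) = P n U + P n V := by
  ext a b
  simp only [P, Matrix.add_apply, Matrix.of_apply]
  ring

theorem Q_add (n : ℕ) (U V : gl n) : Q n (U + V) = Q n U + Q n V := by
  ext a b
  simp only [Q, Matrix.add_apply, Matrix.of_apply]
  ring

theorem P_smul (n : ℕ) (c : ℂ) (U : gl n) : P n (c • U) = c • P n U := by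
  ext a b
  simp only [P, Matrix.smul_apply, Matrix.of_apply, smul_eq_mul]
  ring

theorem Q_smul (n : ℕ) (c : ℂ) (U : gl n) : Q n (c • U) = c • Q n U := by
  ext a b
  simp only [Q, Matrix.smul_apply, Matrix.of_apply, smul_eq_mul]
  ring

theorem P_sub (n : ℕ) (U V : gl n) : P n (U - V) = P n U - P n V := by
  ext a b
  simp only [P, Matrix.sub_apply, Matrix.of_apply]
  ring

theorem Q_sub (n : ℕ) (U V : gl n) : Q n (U - V) = Q n U - Q n V := by
  ext a b
  simp only [Q, Matrix.sub_apply, Matrix.of_apply]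
  ring

def phi (n : ℕ) : Fixed n →ₗ[ℂ] Matrix (Fin (n+1)) (Fin (n+1)) ℂ × Matrix (Fin n) (Fin n) ℂ where
  toFun x := (P n x.1, Q n x.1)
  map_add' x y := by
    show (P n ((x:gl n) + (y:gl n)), Q n ((x:gl n) + (y:gl n))) = _
    rw [P_add, Q_add]
    rfl
  map_smul' c x := by
    show (P n (c • (x:gl n)), Q n (c • (x:gl n))) = _
    rw [P_smul, Q_smul]
    rfl

/-! ### Generators -/

theorem P_eG (n i : ℕ) (h2 : i < n) : P n (eG n i) = Eu (n+1) i (i+1) := by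
  ext a b
  have ha := a.2
  have hb := b.2
  show wA n a * (eG n i (ι1 n a) (ι1 n b) + eG n i (ι1 n a) (ι2 n b)) = _
  simp only [eG, Eu, Matrix.add_apply, Matrix.of_apply, wA]
  split_ifs <;> (try simp only [ι1_val, ι2_val] at *) <;> (try omega) <;> ring

theorem Q_eG (n i : ℕ) (h2 : i < n) : Q n (eG n i) = Eu n i (i+1) := by
  ext a b
  have ha := a.2
  have hb := b.2
  show eG n i (κ1 n a) (κ1 n b) - eG n i (κ1 n a) (κ2 n b) = _
  simp only [eG, Eu, Matrix.add_apply, Matrix.of_apply]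
  split_ifs <;> (try simp only [κ1_val, κ2_val] at *) <;> (try omega) <;> ring

theorem P_fG (n i : ℕ) (h2 : i < n) : P n (fG n i) = Eu (n+1) (i+1) i := by
  ext a b
  have ha := a.2
  have hb := b.2
  show wA n a * (fG n i (ι1 n a) (ι1 n b) + fG n i (ι1 n a) (ι2 n b)) = _
  simp only [fG, Eu, Matrix.add_apply, Matrix.of_apply, wA]
  split_ifs <;> (try simp only [ι1_val, ι2_val] at *) <;> (try omega) <;> ring

theorem Q_fG (n i : ℕ) (h2 : i < n) : Q n (fG n i) = Eu n (i+1) i := by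
  ext a b
  have ha := a.2
  have hb := b.2
  show fG n i (κ1 n a) (κ1 n b) - fG n i (κ1 n a) (κ2 n b) = _
  simp only [fG, Eu, Matrix.add_apply, Matrix.of_apply]
  split_ifs <;> (try simp only [κ1_val, κ2_val] at *) <;> (try omega) <;> ring

theorem P_eG_n (n : ℕ) : P n (eG n n) = (2 : ℂ) • Eu (n+1) n (n+1) := by
  ext a b
  have ha := a.2
  have hb := b.2
  show wA n a * (eG n n (ι1 n a) (ι1 n b) + eG n n (ι1 n a) (ι2 n b)) = _
  simp only [eG, Eu, Matrix.add_apply, Matrix.of_apply, Matrix.smul_apply, smul_eq_mul,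
    wA]
  split_ifs <;> (try simp only [ι1_val, ι2_val] at *) <;> (try omega) <;> ring

theorem Q_eG_n (n : ℕ) : Q n (eG n n) = 0 := by
  ext a b
  have ha := a.2
  have hb := b.2
  show eG n n (κ1 n a) (κ1 n b) - eG n n (κ1 n a) (κ2 n b) = _
  simp only [eG, Eu, Matrix.add_apply, Matrix.of_apply, Matrix.zero_apply]
  split_ifs <;> (try simp only [κ1_val, κ2_val] at *) <;> (try omega) <;> ring

theorem P_fG_n (n : ℕ) : P n (fG n n) = Eu (n+1) (n+1) n := by
  ext a b
  have ha := a.2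
  have hb := b.2
  show wA n a * (fG n n (ι1 n a) (ι1 n b) + fG n n (ι1 n a) (ι2 n b)) = _
  simp only [fG, Eu, Matrix.add_apply, Matrix.of_apply, wA]
  split_ifs <;> (try simp only [ι1_val, ι2_val] at *) <;> (try omega) <;> ring

theorem Q_fG_n (n : ℕ) : Q n (fG n n) = 0 := by
  ext a b
  have ha := a.2
  have hb := b.2
  show fG n n (κ1 n a) (κ1 n b) - fG n n (κ1 n a) (κ2 n b) = _
  simp only [fG, Eu, Matrix.add_apply, Matrix.of_apply, Matrix.zero_apply]
  split_ifs <;> (try simp only [κ1_val, κ2_val] at *) <;> (try omega) <;> ring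

theorem P_dG (n i : ℕ) (h1 : 1 ≤ i) (h2 : i ≤ n) : P n (dG n i) = Eu (n+1) i i := by
  ext a b
  have ha := a.2
  have hb := b.2
  show wA n a * (dG n i (ι1 n a) (ι1 n b) + dG n i (ι1 n a) (ι2 n b)) = _
  simp only [dG, Eu, Matrix.add_apply, Matrix.of_apply, wA]
  split_ifs <;> (try simp only [ι1_val, ι2_val] at *) <;> (try omega) <;> ring

theorem Q_dG (n i : ℕ) (h1 : 1 ≤ i) (h2 : i ≤ n) : Q n (dG n i) = Eu n i i := by
  ext a b
  have ha := a.2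
  have hb := b.2
  show dG n i (κ1 n a) (κ1 n b) - dG n i (κ1 n a) (κ2 n b) = _
  simp only [dG, Eu, Matrix.add_apply, Matrix.of_apply]
  split_ifs <;> (try simp only [κ1_val, κ2_val] at *) <;> (try omega) <;> ring

theorem P_dG_n (n : ℕ) : P n (dG n (n+1)) = (2 : ℂ) • Eu (n+1) (n+1) (n+1) := by
  ext a b
  have ha := a.2
  have hb := b.2
  show wA n a * (dG n (n+1) (ι1 n a) (ι1 n b) + dG n (n+1) (ι1 n a) (ι2 n b)) = _
  simp only [dG, Eu, Matrix.add_apply, Matrix.of_apply, Matrix.smul_apply, smul_eq_mul,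
    wA]
  split_ifs <;> (try simp only [ι1_val, ι2_val] at *) <;> (try omega) <;> ring

theorem Q_dG_n (n : ℕ) : Q n (dG n (n+1)) = 0 := by
  ext a b
  have ha := a.2
  have hb := b.2
  show dG n (n+1) (κ1 n a) (κ1 n b) - dG n (n+1) (κ1 n a) (κ2 n b) = _
  simp only [dG, Eu, Matrix.add_apply, Matrix.of_apply, Matrix.zero_apply]
  split_ifs <;> (try simp only [κ1_val, κ2_val] at *) <;> (try omega) <;> ring


/-- There is a Lie algebra isomorphism `φ : gl_{2n+1}(ℂ)^θ → gl_{n+1}(ℂ) ⊕ gl_n(ℂ)` with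
`φ(e_i) = e_i + ē_i`, `φ(f_i) = f_i + f̄_i` for `i < n`, `φ(e_n) = 2e_n`, `φ(f_n) = f_n`,
`φ(d_i) = h_i + h̄_i` for `1 ≤ i ≤ n`, and `φ(d_{n+1}) = 2h_{n+1}` (first components in
`gl_{n+1}`, second components in `gl_n`). -/
theorem stmt_7 (n : ℕ) :
    ∃ φ : Fixed n →ₗ[ℂ] Matrix (Fin (n+1)) (Fin (n+1)) ℂ × Matrix (Fin n) (Fin n) ℂ,
      Function.Bijective φ ∧
      (∀ x y z : Fixed n, (z : gl n) = ⁅(x : gl n), (y : gl n)⁆ →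
        (φ z).1 = ⁅(φ x).1, (φ y).1⁆ ∧ (φ z).2 = ⁅(φ x).2, (φ y).2⁆) ∧
      (∀ i : ℕ, 1 ≤ i → i < n → ∀ x : Fixed n,
        ((x : gl n) = eG n i → φ x = (Eu (n+1) i (i+1), Eu n i (i+1))) ∧
        ((x : gl n) = fG n i → φ x = (Eu (n+1) (i+1) i, Eu n (i+1) i))) ∧
      (∀ x : Fixed n,
        ((x : gl n) = eG n n → φ x = ((2 : ℂ) • Eu (n+1) n (n+1), 0)) ∧
        ((x : gl n) = fG n n → φ x = (Eu (n+1) (n+1) n, 0))) ∧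
      (∀ i : ℕ, 1 ≤ i → i ≤ n → ∀ x : Fixed n,
        (x : gl n) = dG n i → φ x = (Eu (n+1) i i, Eu n i i)) ∧
      (∀ x : Fixed n,
        (x : gl n) = dG n (n+1) → φ x = ((2 : ℂ) • Eu (n+1) (n+1) (n+1), 0)) := by
  refine ⟨phi n, ?_, ?_, ?_, ?_, ?_, ?_⟩
  · refine Function.bijective_iff_has_inverse.mpr
      ⟨fun p => ⟨psi n p.1 p.2, psi_fixed n p.1 p.2⟩, ?_, ?_⟩
    · intro x
      apply Subtype.ext
      show psi n (P n (x : gl n)) (Q n (x : gl n)) = (x : gl n)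
      exact psi_leftinv x.2
    · intro p
      show (P n (psi n p.1 p.2), Q n (psi n p.1 p.2)) = p
      rw [P_psi, Q_psi]
  · intro x y z hz
    have hx : theta n (x : gl n) = (x : gl n) := x.2
    have hy : theta n (y : gl n) = (y : gl n) := y.2
    constructor
    · show P n (z : gl n) = ⁅P n (x : gl n), P n (y : gl n)⁆
      rw [hz, Ring.lie_def, Ring.lie_def, P_sub, P_mul hx hy, P_mul hy hx]
    · show Q n (z : gl n) = ⁅Q n (x : gl n), Q n (y : gl n)⁆
      rw [hz, Ring.lie_def, Ring.lie_def, Q_sub, Q_mul hx hy, Q_mul hy hx]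
  · intro i hi1 hi2 x
    constructor
    · intro hx
      show (P n (x : gl n), Q n (x : gl n)) = _
      rw [hx, P_eG n i hi2, Q_eG n i hi2]
    · intro hx
      show (P n (x : gl n), Q n (x : gl n)) = _
      rw [hx, P_fG n i hi2, Q_fG n i hi2]
  · intro x
    constructor
    · intro hx
      show (P n (x : gl n), Q n (x : gl n)) = _
      rw [hx, P_eG_n, Q_eG_n]
    · intro hx
      show (P n (x : gl n), Q n (x : gl n)) = _
      rw [hx, P_fG_n, Q_fG_n]
  · intro i hi1 hi2 x hx
    show (P n (x : gl n), Q n (x : gl n)) = _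
    rw [hx, P_dG n i hi1 hi2, Q_dG n i hi1 hi2]
  · intro x hx
    show (P n (x : gl n), Q n (x : gl n)) = _
    rw [hx, P_dG_n, Q_dG_n]
end
end

section
/- There is a Lie algebra homomorphism ρ from gl_{2n}(ℂ)^θ to gl_n(ℂ) ⊕ gl_n(ℂ) determined by ρ(e_i) = e_i + ē_i, ρ(f_i) = f_i + f̄_i (1 ≤ i ≤ n−1), ρ(d_i) = h_i + h̄_i (1 ≤ i ≤ n), and ρ(t) = h_n − h̄_n; moreover ρ is an isomorphism. -/
open Matrix

noncomputable section

/-- `gl_{2n}(ℂ)` with bracket `[X,Y] = XY - YX`. -/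
abbrev gle (n : ℕ) := Matrix (Fin (2*n)) (Fin (2*n)) ℂ

/-- `e_j = E_j + F_{2n-j} = E_{j,j+1} + E_{2n+1-j,2n-j}`. -/
def eE (n j : ℕ) : gle n := Eu (2*n) j (j+1) + Eu (2*n) (2*n+1-j) (2*n-j)

/-- `f_j = F_j + E_{2n-j} = E_{j+1,j} + E_{2n-j,2n+1-j}`. -/
def fE (n j : ℕ) : gle n := Eu (2*n) (j+1) j + Eu (2*n) (2*n-j) (2*n+1-j)

/-- `t = E_n + F_n = E_{n,n+1} + E_{n+1,n}`. -/
def tE (n : ℕ) : gle n := Eu (2*n) n (n+1) + Eu (2*n) (n+1) n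

/-- `d_a = H_a + H_{2n+1-a}`. -/
def dE (n a : ℕ) : gle n := Eu (2*n) a a + Eu (2*n) (2*n+1-a) (2*n+1-a)

/-- The involution `θ` of `gl_{2n}(ℂ)` with `θ(E_i) = F_{2n-i}`, `θ(F_i) = E_{2n-i}`,
`θ(H_i) = H_{2n+1-i}` (conjugation by the order-reversing permutation). -/
def thetaE (n : ℕ) (X : gle n) : gle n := Matrix.of fun i j => X i.rev j.rev

theorem thetaE_linear (n : ℕ) (c : ℂ) (X Y : gle n) :
    thetaE n (X + Y) = thetaE n X + thetaE n Y ∧ thetaE n (c • X) = c • thetaE n X := by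
  constructor <;> (ext i j; simp [thetaE])

/-- The fixed-point subalgebra `gl_{2n}(ℂ)^θ`, as a subspace. -/
def FixedE (n : ℕ) : Submodule ℂ (gle n) where
  carrier := {X | thetaE n X = X}
  add_mem' := by
    intro a b ha hb
    simp only [Set.mem_setOf_eq] at *
    rw [(thetaE_linear n 0 a b).1, ha, hb]
  zero_mem' := by
    simp only [Set.mem_setOf_eq]
    ext i j; simp [thetaE]
  smul_mem' := by
    intro c x hx
    simp only [Set.mem_setOf_eq] at *
    rw [(thetaE_linear n c x x).2, hx]



def embE (n : ℕ) (i : Fin n) : Fin (2*n) := ⟨i.val, by omega⟩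

@[simp] lemma embE_val (n : ℕ) (i : Fin n) : (embE n i).val = i.val := rfl

def splitE (n : ℕ) : Fin n ⊕ Fin n ≃ Fin (2*n) where
  toFun := Sum.elim (embE n) (fun k => (embE n k).rev)
  invFun a := if h : (a : ℕ) < n then .inl ⟨a, h⟩ else .inr ⟨2*n-1-a, by omega⟩
  left_inv := by
    rintro (k | k) <;> have := k.isLt <;>
      simp only [Sum.elim_inl, Sum.elim_inr, Fin.val_rev, embE_val]
    · exact dif_pos this
    · refine (dif_neg (show ¬ (2 * n - ((k:ℕ) + 1) < n) by omega)).trans ?_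
      congr 1; ext; simp; omega
  right_inv := by
    intro a; have := a.isLt
    dsimp only
    by_cases h : (a : ℕ) < n
    · rw [dif_pos h]; rfl
    · rw [dif_neg h]
      simp only [Sum.elim_inr]
      ext; simp [Fin.val_rev, embE]; omega

lemma sum_splitE (n : ℕ) (f : Fin (2*n) → ℂ) :
    (∑ a, f a) = (∑ k, f (embE n k)) + ∑ k, f (embE n k).rev := by
  rw [← Equiv.sum_comp (splitE n) f, Fintype.sum_sum_type]; rfl

def Amap (n : ℕ) (X : gle n) : Matrix (Fin n) (Fin n) ℂ :=
  Matrix.of fun i j => X (embE n i) (embE n j) + X (embE n i) (embE n j).rev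

def Bmap (n : ℕ) (X : gle n) : Matrix (Fin n) (Fin n) ℂ :=
  Matrix.of fun i j => X (embE n i) (embE n j) - X (embE n i) (embE n j).rev

lemma fixed_apply {n : ℕ} {Y : gle n} (hY : thetaE n Y = Y) (a b : Fin (2*n)) :
    Y a.rev b.rev = Y a b := by
  conv_rhs => rw [← hY]
  rfl

lemma Amap_mul {n : ℕ} (X Y : gle n) (hY : thetaE n Y = Y) :
    Amap n (X * Y) = Amap n X * Amap n Y := by
  ext i j
  simp only [Amap, Matrix.of_apply, Matrix.mul_apply]
  rw [← Finset.sum_add_distrib, sum_splitE n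
    (fun a => X (embE n i) a * Y a (embE n j) + X (embE n i) a * Y a (embE n j).rev)]
  rw [← Finset.sum_add_distrib]
  refine Finset.sum_congr rfl fun k _ => ?_
  have h1 : Y (embE n k).rev (embE n j) = Y (embE n k) (embE n j).rev := by
    rw [← fixed_apply hY (embE n k) (embE n j).rev, Fin.rev_rev]
  have h2 : Y (embE n k).rev (embE n j).rev = Y (embE n k) (embE n j) :=
    fixed_apply hY _ _
  rw [h1, h2]; ring

lemma Bmap_mul {n : ℕ} (X Y : gle n) (hY : thetaE n Y = Y) :
    Bmap n (X * Y) = Bmap n X * Bmap n Y := by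
  ext i j
  simp only [Bmap, Matrix.of_apply, Matrix.mul_apply]
  rw [← Finset.sum_sub_distrib, sum_splitE n
    (fun a => X (embE n i) a * Y a (embE n j) - X (embE n i) a * Y a (embE n j).rev)]
  rw [← Finset.sum_add_distrib]
  refine Finset.sum_congr rfl fun k _ => ?_
  have h1 : Y (embE n k).rev (embE n j) = Y (embE n k) (embE n j).rev := by
    rw [← fixed_apply hY (embE n k) (embE n j).rev, Fin.rev_rev]
  have h2 : Y (embE n k).rev (embE n j).rev = Y (embE n k) (embE n j) :=
    fixed_apply hY _ _
  rw [h1, h2]; ring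

def sigE (n : ℕ) (A B : Matrix (Fin n) (Fin n) ℂ) : gle n :=
  Matrix.of fun a b =>
    if ha : (a : ℕ) < n then
      if hb : (b : ℕ) < n then
        (A ⟨a, ha⟩ ⟨b, hb⟩ + B ⟨a, ha⟩ ⟨b, hb⟩) / 2
      else
        (A ⟨a, ha⟩ ⟨2*n-1-b, by omega⟩ - B ⟨a, ha⟩ ⟨2*n-1-b, by omega⟩) / 2
    else
      if hb : (b : ℕ) < n then
        (A ⟨2*n-1-a, by have := a.isLt; omega⟩ ⟨b, hb⟩ -
          B ⟨2*n-1-a, by have := a.isLt; omega⟩ ⟨b, hb⟩) / 2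
      else
        (A ⟨2*n-1-a, by have := a.isLt; omega⟩ ⟨2*n-1-b, by have := b.isLt; omega⟩ +
          B ⟨2*n-1-a, by have := a.isLt; omega⟩ ⟨2*n-1-b, by have := b.isLt; omega⟩) / 2

lemma sigE_fixed (n : ℕ) (A B : Matrix (Fin n) (Fin n) ℂ) :
    thetaE n (sigE n A B) = sigE n A B := by
  ext a b
  have ha := a.isLt; have hb := b.isLt
  show sigE n A B a.rev b.rev = sigE n A B a b
  simp only [sigE, Matrix.of_apply, Fin.val_rev]
  simp only [show 2*n-1-(2*n-((a:ℕ)+1)) = (a:ℕ) from by omega,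
    show 2*n-1-(2*n-((b:ℕ)+1)) = (b:ℕ) from by omega,
    show 2*n-1-(a:ℕ) = 2*n-((a:ℕ)+1) from by omega,
    show 2*n-1-(b:ℕ) = 2*n-((b:ℕ)+1) from by omega, Fin.eta]
  split_ifs <;> first | rfl | omega

lemma Amap_sigE (n : ℕ) (A B : Matrix (Fin n) (Fin n) ℂ) :
    Amap n (sigE n A B) = A ∧ Bmap n (sigE n A B) = B := by
  constructor <;> ext i j <;>
  · have hi := i.isLt; have hj := j.isLt
    simp only [Amap, Bmap, sigE, Matrix.of_apply, embE, Fin.val_rev]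
    rw [dif_pos (by omega), dif_pos (by omega), dif_pos (by omega), dif_neg (by omega)]
    simp only [show 2*n-1-(2*n-((j:ℕ)+1)) = (j:ℕ) from by omega, Fin.eta]
    ring

lemma Amap_sub {n : ℕ} (X Y : gle n) : Amap n (X - Y) = Amap n X - Amap n Y := by
  ext i j; simp [Amap]; ring

lemma Bmap_sub {n : ℕ} (X Y : gle n) : Bmap n (X - Y) = Bmap n X - Bmap n Y := by
  ext i j; simp [Bmap]; ring

lemma rho_inj {n : ℕ} (X : gle n) (hX : thetaE n X = X)
    (hA : Amap n X = 0) (hB : Bmap n X = 0) : X = 0 := by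
  have key : ∀ i k : Fin n, X (embE n i) (embE n k) = 0 ∧ X (embE n i) (embE n k).rev = 0 := by
    intro i k
    have h1 : X (embE n i) (embE n k) + X (embE n i) (embE n k).rev = 0 := by
      have := Matrix.ext_iff.mpr hA i k
      simpa [Amap] using this
    have h2 : X (embE n i) (embE n k) - X (embE n i) (embE n k).rev = 0 := by
      have := Matrix.ext_iff.mpr hB i k
      simpa [Bmap] using this
    exact ⟨by linear_combination (h1 + h2) / 2, by linear_combination (h1 - h2) / 2⟩
  have main : ∀ a b : Fin (2*n), (a : ℕ) < n → X a b = 0 := by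
    intro a b ha
    by_cases hb : (b : ℕ) < n
    · have := (key ⟨a, ha⟩ ⟨b, hb⟩).1
      convert this using 2 <;> exact Fin.ext rfl
    · have hb2 : 2*n-1-(b:ℕ) < n := by have := b.isLt; omega
      have := (key ⟨a, ha⟩ ⟨2*n-1-(b:ℕ), hb2⟩).2
      convert this using 2 <;>
        exact Fin.ext (by have := b.isLt; simp only [Fin.val_rev, embE_val] <;> omega)
  ext a b
  show X a b = 0
  by_cases ha : (a : ℕ) < n
  · exact main a b ha
  · have hrev : ((a.rev : Fin (2*n)) : ℕ) < n := by
      simp [Fin.val_rev]; have := a.isLt; omega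
    have := main a.rev b.rev hrev
    rwa [fixed_apply hX] at this


lemma Amap_eE (n i : ℕ) (h1 : 1 ≤ i) (h2 : i ≤ n-1) :
    Amap n (eE n i) = Eu n i (i+1) ∧ Bmap n (eE n i) = Eu n i (i+1) := by
  constructor <;> ext a b <;>
  · have ha := a.isLt; have hb := b.isLt
    simp only [Amap, Bmap, eE, Eu, Matrix.of_apply, Matrix.add_apply, Fin.val_rev, embE_val]
    split_ifs <;> grind

lemma Amap_fE (n i : ℕ) (h1 : 1 ≤ i) (h2 : i ≤ n-1) :
    Amap n (fE n i) = Eu n (i+1) i ∧ Bmap n (fE n i) = Eu n (i+1) i := by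
  constructor <;> ext a b <;>
  · have ha := a.isLt; have hb := b.isLt
    simp only [Amap, Bmap, fE, Eu, Matrix.of_apply, Matrix.add_apply, Fin.val_rev, embE_val]
    split_ifs <;> grind

lemma Amap_dE (n i : ℕ) (h1 : 1 ≤ i) (h2 : i ≤ n) :
    Amap n (dE n i) = Eu n i i ∧ Bmap n (dE n i) = Eu n i i := by
  constructor <;> ext a b <;>
  · have ha := a.isLt; have hb := b.isLt
    simp only [Amap, Bmap, dE, Eu, Matrix.of_apply, Matrix.add_apply, Fin.val_rev, embE_val]
    split_ifs <;> grind

lemma Amap_tE (n : ℕ) :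
    Amap n (tE n) = Eu n n n ∧ Bmap n (tE n) = -(Eu n n n) := by
  constructor <;> ext a b <;>
  · have ha := a.isLt; have hb := b.isLt
    simp only [Amap, Bmap, tE, Eu, Matrix.of_apply, Matrix.add_apply, Matrix.neg_apply,
      Fin.val_rev, embE_val]
    split_ifs <;> grind

lemma mem_fixed {n : ℕ} {X : gle n} (h : X ∈ FixedE n) : thetaE n X = X := h

def rhoMap (n : ℕ) : FixedE n →ₗ[ℂ] Matrix (Fin n) (Fin n) ℂ × Matrix (Fin n) (Fin n) ℂ where
  toFun x := (Amap n x.val, Bmap n x.val)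
  map_add' x y := by
    refine Prod.ext ?_ ?_ <;> ext i j <;>
      simp [Amap, Bmap, Matrix.add_apply] <;> ring
  map_smul' c x := by
    refine Prod.ext ?_ ?_ <;> ext i j <;>
      simp [Amap, Bmap, Matrix.smul_apply, smul_eq_mul] <;> ring

@[simp] lemma rhoMap_apply (n : ℕ) (x : FixedE n) :
    rhoMap n x = (Amap n (x : gle n), Bmap n (x : gle n)) := rfl

/-- There is a Lie algebra isomorphism `ρ : gl_{2n}(ℂ)^θ → gl_n(ℂ) ⊕ gl_n(ℂ)` with
`ρ(e_i) = e_i + ē_i`, `ρ(f_i) = f_i + f̄_i` (`1 ≤ i ≤ n-1`), `ρ(d_i) = h_i + h̄_i`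
(`1 ≤ i ≤ n`), and `ρ(t) = h_n - h̄_n`. -/
theorem stmt_12 (n : ℕ) :
    ∃ ρ : FixedE n →ₗ[ℂ] Matrix (Fin n) (Fin n) ℂ × Matrix (Fin n) (Fin n) ℂ,
      Function.Bijective ρ ∧
      (∀ x y z : FixedE n, (z : gle n) = ⁅(x : gle n), (y : gle n)⁆ →
        (ρ z).1 = ⁅(ρ x).1, (ρ y).1⁆ ∧ (ρ z).2 = ⁅(ρ x).2, (ρ y).2⁆) ∧
      (∀ i : ℕ, 1 ≤ i → i ≤ n-1 → ∀ x : FixedE n,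
        ((x : gle n) = eE n i → ρ x = (Eu n i (i+1), Eu n i (i+1))) ∧
        ((x : gle n) = fE n i → ρ x = (Eu n (i+1) i, Eu n (i+1) i))) ∧
      (∀ i : ℕ, 1 ≤ i → i ≤ n → ∀ x : FixedE n,
        (x : gle n) = dE n i → ρ x = (Eu n i i, Eu n i i)) ∧
      (∀ x : FixedE n, (x : gle n) = tE n → ρ x = (Eu n n n, -(Eu n n n))) := by
  refine ⟨rhoMap n, ?_, ?_, ?_, ?_, ?_⟩
  · constructor
    · intro x y h
      simp only [rhoMap_apply, Prod.mk.injEq] at h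
      obtain ⟨h1, h2⟩ := h
      apply Subtype.ext
      have hfix : thetaE n ((x : gle n) - (y : gle n)) = (x : gle n) - (y : gle n) :=
        mem_fixed (sub_mem x.2 y.2)
      have h0 := rho_inj _ hfix (by rw [Amap_sub, h1, sub_self])
        (by rw [Bmap_sub, h2, sub_self])
      exact sub_eq_zero.mp h0
    · rintro ⟨A, B⟩
      refine ⟨⟨sigE n A B, sigE_fixed n A B⟩, ?_⟩
      simp only [rhoMap_apply, Prod.mk.injEq]
      exact ⟨(Amap_sigE n A B).1, (Amap_sigE n A B).2⟩
  · intro x y z hz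
    have hx := mem_fixed x.2
    have hy := mem_fixed y.2
    simp only [rhoMap_apply]
    constructor
    · rw [hz, Ring.lie_def, Ring.lie_def, Amap_sub, Amap_mul _ _ hy, Amap_mul _ _ hx]
    · rw [hz, Ring.lie_def, Ring.lie_def, Bmap_sub, Bmap_mul _ _ hy, Bmap_mul _ _ hx]
  · intro i hi1 hi2 x
    constructor
    · intro hx
      simp only [rhoMap_apply, hx, Prod.mk.injEq]
      exact ⟨(Amap_eE n i hi1 hi2).1, (Amap_eE n i hi1 hi2).2⟩
    · intro hx
      simp only [rhoMap_apply, hx, Prod.mk.injEq]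
      exact ⟨(Amap_fE n i hi1 hi2).1, (Amap_fE n i hi1 hi2).2⟩
  · intro i hi1 hi2 x hx
    simp only [rhoMap_apply, hx, Prod.mk.injEq]
    exact ⟨(Amap_dE n i hi1 hi2).1, (Amap_dE n i hi1 hi2).2⟩
  · intro x hx
    simp only [rhoMap_apply, hx, Prod.mk.injEq]
    exact ⟨(Amap_tE n).1, (Amap_tE n).2⟩
end
end
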